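/- For every real number α > √2, the series ∑_{n=1}^{∞} 1/Z(n)^α is convergent. -/

import Mathlib

/-- The m-th triangular number. -/
def T (m : ℕ) : ℕ := m * (m + 1) / 2

/-- The pseudo-Smarandache function: the least positive m with n ∣ T m. -/
noncomputable def Z (n : ℕ) : ℕ := sInf {m : ℕ | 0 < m ∧ n ∣ T m}

lemma pow5_le_two (a : ℕ) : (a + 1) ^ 5 ≤ 263 * 2 ^ a := by
  induction a with
  | zero => norm_num
  | succ a ih =>
    rcases lt_or_ge a 6 with h | h
    · interval_cases a <;> norm_num
    · have h1 : 7 * (a + 2) ≤ 8 * (a + 1) := by omega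
      have h3 : (a + 2) ^ 5 * 16807 ≤ (a + 1) ^ 5 * 32768 := by
        calc (a + 2) ^ 5 * 16807 = (7 * (a + 2)) ^ 5 := by ring
        _ ≤ (8 * (a + 1)) ^ 5 := Nat.pow_le_pow_left h1 5
        _ = (a + 1) ^ 5 * 32768 := by ring
      have h4 : (a + 2) ^ 5 ≤ 2 * (a + 1) ^ 5 := by
        have : (a + 2) ^ 5 * 16807 ≤ (2 * (a + 1) ^ 5) * 16807 := by linarith [h3, Nat.zero_le ((a + 1) ^ 5)]
        exact Nat.le_of_mul_le_mul_right this (by norm_num)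
      calc (a + 1 + 1) ^ 5 = (a + 2) ^ 5 := by ring
      _ ≤ 2 * (a + 1) ^ 5 := h4
      _ ≤ 2 * (263 * 2 ^ a) := by omega
      _ = 263 * 2 ^ (a + 1) := by ring

lemma pow5_le_big {p : ℕ} (hp : 32 ≤ p) (a : ℕ) : (a + 1) ^ 5 ≤ p ^ a := by
  induction a with
  | zero => simp
  | succ a ih =>
    have h1 : (a + 2) ^ 5 ≤ 32 * (a + 1) ^ 5 := by
      calc (a + 2) ^ 5 ≤ (2 * (a + 1)) ^ 5 := Nat.pow_le_pow_left (by omega) 5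
      _ = 32 * (a + 1) ^ 5 := by ring
    calc (a + 1 + 1) ^ 5 = (a + 2) ^ 5 := by ring
    _ ≤ 32 * (a + 1) ^ 5 := h1
    _ ≤ p * p ^ a := Nat.mul_le_mul hp ih
    _ = p ^ (a + 1) := (pow_succ' p a).symm

lemma card_divisors_pow5 (N : ℕ) (hN : N ≠ 0) : N.divisors.card ^ 5 ≤ 263 ^ 32 * N := by
  classical
  set c : ℕ → ℕ := fun p => if p < 32 then 263 else 1 with hc
  have hprod : ∏ p ∈ N.primeFactors, p ^ N.factorization p = N := by
    simpa [Finsupp.prod, Nat.support_factorization] using Nat.factorization_prod_pow_eq_self hN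
  have hd : N.divisors.card = ∏ p ∈ N.primeFactors, (N.factorization p + 1) := by
    simpa [Finsupp.prod, Nat.support_factorization] using Nat.card_divisors hN
  have step : ∀ p ∈ N.primeFactors, (N.factorization p + 1) ^ 5 ≤ c p * p ^ N.factorization p := by
    intro p hp
    have hpp : p.Prime := Nat.prime_of_mem_primeFactors hp
    by_cases h32 : p < 32
    · simp only [hc, if_pos h32]
      calc (N.factorization p + 1) ^ 5 ≤ 263 * 2 ^ N.factorization p := pow5_le_two _
      _ ≤ 263 * p ^ N.factorization p :=
        Nat.mul_le_mul_left _ (Nat.pow_le_pow_left hpp.two_le _)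
    · simp only [hc, if_neg h32, one_mul]
      exact pow5_le_big (by omega) _
  have hcbound : (∏ p ∈ N.primeFactors, c p) ≤ 263 ^ 32 := by
    have h1 : ∏ p ∈ N.primeFactors.filter (· < 32), c p = ∏ p ∈ N.primeFactors, c p := by
      apply Finset.prod_subset (Finset.filter_subset _ _)
      intro x hx hxf
      have hx32 : ¬ x < 32 := fun h => hxf (Finset.mem_filter.mpr ⟨hx, h⟩)
      simp [hc, hx32]
    rw [← h1]
    have h2 : N.primeFactors.filter (· < 32) ⊆ Finset.range 32 := by
      intro x hx
      simp only [Finset.mem_filter] at hx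
      exact Finset.mem_range.mpr hx.2
    calc ∏ p ∈ N.primeFactors.filter (· < 32), c p
        ≤ ∏ _p ∈ N.primeFactors.filter (· < 32), 263 := by
          apply Finset.prod_le_prod'
          intro i _
          simp only [hc]
          split <;> omega
    _ = 263 ^ (N.primeFactors.filter (· < 32)).card := by rw [Finset.prod_const]
    _ ≤ 263 ^ 32 := Nat.pow_le_pow_right (by norm_num)
        (le_trans (Finset.card_le_card h2) (by simp))
  calc N.divisors.card ^ 5 = ∏ p ∈ N.primeFactors, (N.factorization p + 1) ^ 5 := by
        rw [hd, Finset.prod_pow]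
  _ ≤ ∏ p ∈ N.primeFactors, (c p * p ^ N.factorization p) := Finset.prod_le_prod' step
  _ = (∏ p ∈ N.primeFactors, c p) * ∏ p ∈ N.primeFactors, p ^ N.factorization p :=
      Finset.prod_mul_distrib
  _ ≤ 263 ^ 32 * N := by rw [hprod]; exact Nat.mul_le_mul_right _ hcbound

lemma T_odd (k : ℕ) : T (2 * k + 1) = (2 * k + 1) * (k + 1) := by
  have h : (2 * k + 1) * (2 * k + 1 + 1) = 2 * ((2 * k + 1) * (k + 1)) := by ring
  rw [T, h, Nat.mul_div_cancel_left _ two_pos]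

lemma Z_spec {n : ℕ} (hn : n ≠ 0) : 0 < Z n ∧ n ∣ T (Z n) := by
  have hne : {m : ℕ | 0 < m ∧ n ∣ T m}.Nonempty := by
    obtain ⟨k, rfl⟩ : ∃ k, n = k + 1 := ⟨n - 1, by omega⟩
    exact ⟨2 * k + 1, by omega, by rw [T_odd]; exact Dvd.intro_left _ rfl⟩
  exact Nat.sInf_mem hne

lemma T_pos {b : ℕ} (hb : 0 < b) : 0 < T b := by
  rw [T]
  exact (Nat.le_div_iff_mul_le two_pos).mpr (by nlinarith)

lemma T_le_sq (m : ℕ) : T m ≤ m ^ 2 := by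
  rw [T]
  exact Nat.div_le_of_le_mul (by nlinarith)

theorem stmt_18 (α : ℝ) (hα : Real.sqrt 2 < α) :
    Summable (fun n : ℕ => 1 / (Z (n + 1) : ℝ) ^ α) := by
  classical
  have h75 : (7 : ℝ) / 5 < α := by
    refine lt_trans ?_ hα
    rw [show ((7:ℝ)/5) = |((7:ℝ)/5)| by rw [abs_of_pos]; norm_num, ← Real.sqrt_sq_eq_abs]
    exact Real.sqrt_lt_sqrt (by positivity) (by norm_num)
  have hα0 : 0 < α := by linarith
  set K : ℝ := ((263 : ℝ) ^ 32) ^ ((1 : ℝ) / 5) with hK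
  have hK0 : 0 ≤ K := Real.rpow_nonneg (by positivity) _
  set g : ℕ → ℝ := fun m => ((T m).divisors.card : ℝ) * (m : ℝ) ^ (-α) with hg
  have hg0 : ∀ m, 0 ≤ g m := fun m => by
    apply mul_nonneg (Nat.cast_nonneg _) (Real.rpow_nonneg (Nat.cast_nonneg _) _)
  -- summability of g
  have hgsum : Summable g := by
    have hexp : (2 : ℝ) / 5 - α < -1 := by linarith
    refine Summable.of_nonneg_of_le hg0 ?_
      (Summable.mul_left K (Real.summable_nat_rpow.mpr hexp))
    intro m
    rcases Nat.eq_zero_or_pos m with rfl | hm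
    · simp [hg, T, Real.zero_rpow (by linarith : (2:ℝ)/5 - α ≠ 0)]
    · have hm0 : (0 : ℝ) < (m : ℝ) := by exact_mod_cast hm
      -- card bound
      have hnat : (T m).divisors.card ^ 5 ≤ 263 ^ 32 * m ^ 2 :=
        le_trans (card_divisors_pow5 _ (T_pos hm).ne')
          (Nat.mul_le_mul_left _ (T_le_sq m))
      have hcard : ((T m).divisors.card : ℝ) ≤ K * (m : ℝ) ^ ((2:ℝ)/5) := by
        have h1 : (((T m).divisors.card : ℝ) ^ (5:ℕ)) ^ ((1:ℝ)/5)
            ≤ (((263:ℝ) ^ 32) * ((m:ℝ) ^ (2:ℕ))) ^ ((1:ℝ)/5) := by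
          apply Real.rpow_le_rpow (by positivity) ?_ (by norm_num)
          exact_mod_cast hnat
        have h2 : (((T m).divisors.card : ℝ) ^ (5:ℕ)) ^ ((1:ℝ)/5)
            = ((T m).divisors.card : ℝ) := by
          rw [← Real.rpow_natCast _ 5, ← Real.rpow_mul (Nat.cast_nonneg _)]
          norm_num
        have h3 : (((263:ℝ) ^ 32) * ((m:ℝ) ^ (2:ℕ))) ^ ((1:ℝ)/5)
            = K * (m : ℝ) ^ ((2:ℝ)/5) := by
          rw [Real.mul_rpow (by positivity) (by positivity), hK,
            ← Real.rpow_natCast (m:ℝ) 2, ← Real.rpow_mul (Nat.cast_nonneg _)]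
          norm_num
        rwa [h2, h3] at h1
      calc g m ≤ (K * (m : ℝ) ^ ((2:ℝ)/5)) * (m : ℝ) ^ (-α) :=
            mul_le_mul_of_nonneg_right hcard (Real.rpow_nonneg (Nat.cast_nonneg _) _)
      _ = K * (m : ℝ) ^ ((2:ℝ)/5 - α) := by
          rw [mul_assoc, ← Real.rpow_add hm0]
          ring_nf
  -- partial sums bounded
  have hf0 : ∀ n : ℕ, 0 ≤ 1 / (Z (n + 1) : ℝ) ^ α := fun n => by positivity
  refine summable_of_sum_range_le hf0 (c := ∑' m, g m) ?_
  intro N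
  have hrw : ∀ n : ℕ, 1 / (Z (n + 1) : ℝ) ^ α = (fun b : ℕ => (b : ℝ) ^ (-α)) (Z (n + 1)) := by
    intro n
    simp only [Real.rpow_neg (Nat.cast_nonneg _), one_div]
  calc ∑ n ∈ Finset.range N, 1 / (Z (n + 1) : ℝ) ^ α
      = ∑ n ∈ Finset.range N, (fun b : ℕ => (b : ℝ) ^ (-α)) (Z (n + 1)) := by
        exact Finset.sum_congr rfl fun n _ => hrw n
  _ = ∑ b ∈ (Finset.range N).image (fun n => Z (n + 1)),
      ((Finset.range N).filter (fun n => Z (n + 1) = b)).card • (b : ℝ) ^ (-α) :=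
      by exact Finset.sum_comp (fun b : ℕ => (b : ℝ) ^ (-α)) (fun n => Z (n + 1))
  _ ≤ ∑ b ∈ (Finset.range N).image (fun n => Z (n + 1)), g b := by
      apply Finset.sum_le_sum
      intro b hb
      rw [nsmul_eq_mul]
      apply mul_le_mul_of_nonneg_right ?_ (Real.rpow_nonneg (Nat.cast_nonneg _) _)
      -- fiber count ≤ number of divisors of T b
      have hbpos : 0 < b := by
        obtain ⟨n, _, rfl⟩ := Finset.mem_image.mp hb
        exact (Z_spec (Nat.succ_ne_zero n)).1
      have hinj : ∀ n ∈ (Finset.range N).filter (fun n => Z (n + 1) = b),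
          n + 1 ∈ (T b).divisors := by
        intro n hn
        obtain ⟨-, hzb⟩ := Finset.mem_filter.mp hn
        refine Nat.mem_divisors.mpr ⟨?_, (T_pos hbpos).ne'⟩
        rw [← hzb]
        exact (Z_spec (Nat.succ_ne_zero n)).2
      have := Finset.card_le_card_of_injOn (fun n => n + 1) hinj
        (fun x _ y _ h => by simpa using h)
      exact_mod_cast this
  _ ≤ ∑' m, g m := Summable.sum_le_tsum _ (fun b _ => hg0 b) hgsum
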